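/- arXiv:1305.3693 — 4 statements merged into one kernel-verified Lean document; each statement's English description precedes it below -/
import Mathlib

section
/- Let Γ ⊂ ℂ be a lattice, let a be an integer, let z₀, w₀ ∈ ℂ, and let s ∈ ℂ with Re(s) > a/2 + 1. Then the Eisenstein–Kronecker–Lerch series K_a*(z₀, w₀, s; Γ) converges absolutely; that is, the function γ ↦ (conj(z₀ + γ))^a · |z₀ + γ|^{−2s} · χ_{w₀}(γ) is summable over γ ∈ Γ \ {−z₀}. -/
open Complex MeasureTheory
open scoped ComplexConjugate

open Filter Module in
private lemma lattice_summable (Γ : Submodule ℤ ℂ) [DiscreteTopology Γ] [IsZLattice ℝ Γ]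
    (z₀ : ℂ) {t : ℝ} (ht : 2 < t) :
    Summable fun γ : Γ => ‖z₀ + (γ : ℂ)‖ ^ (-t) := by
  have hfree : Module.Free ℤ Γ := ZLattice.module_free ℝ Γ
  have hfin : Module.Finite ℤ Γ := ZLattice.module_finite ℝ Γ
  have hrank : Module.finrank ℤ Γ = 2 := by
    rw [ZLattice.rank ℝ Γ, Complex.finrank_real_complex]
  let b : Basis (Fin 2) ℤ Γ := (Module.Free.chooseBasis ℤ Γ).reindex
    (Fintype.equivFinOfCardEq (by rw [← Module.finrank_eq_card_chooseBasisIndex, hrank]))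
  let B : Basis (Fin 2) ℝ ℂ := Basis.ofZLatticeBasis ℝ Γ b
  let e : (Fin 2 → ℝ) ≃L[ℝ] ℂ := B.equivFunL.symm
  -- transfer to Fin 2 → ℤ
  rw [← (b.equivFun.toEquiv.symm).summable_iff]
  have hcoe : ∀ x : Fin 2 → ℤ, ((b.equivFun.symm x : Γ) : ℂ) = e (fun i => (x i : ℝ)) := by
    intro x
    have : (b.equivFun.symm x : Γ) = ∑ i, x i • b i := by
      rw [Basis.equivFun_symm_apply]
    rw [this]
    have he : e (fun i => (x i : ℝ)) = B.equivFun.symm (fun i => (x i : ℝ)) := rfl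
    rw [he, Basis.equivFun_symm_apply]
    rw [AddSubmonoidClass.coe_finset_sum]
    refine Finset.sum_congr rfl fun i _ => ?_
    rw [Basis.ofZLatticeBasis_apply, Int.cast_smul_eq_zsmul]
    simp
  set C : ℝ := ‖(e.symm : ℂ →L[ℝ] (Fin 2 → ℝ))‖ + 1 with hCdef
  have hC0 : 0 < C := by positivity
  have hC : ∀ v : Fin 2 → ℝ, ‖v‖ ≤ C * ‖e v‖ := by
    intro v
    have h1 : ‖v‖ = ‖e.symm (e v)‖ := by rw [e.symm_apply_apply]
    have h2 : ‖e.symm (e v)‖ ≤ ‖(e.symm : ℂ →L[ℝ] (Fin 2 → ℝ))‖ * ‖e v‖ :=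
      (e.symm : ℂ →L[ℝ] (Fin 2 → ℝ)).le_opNorm _
    calc ‖v‖ ≤ ‖(e.symm : ℂ →L[ℝ] (Fin 2 → ℝ))‖ * ‖e v‖ := h1 ▸ h2
      _ ≤ C * ‖e v‖ := by
          have := norm_nonneg (e v); nlinarith [norm_nonneg ((e.symm : ℂ →L[ℝ] (Fin 2 → ℝ)))]
  have hnormx : ∀ x : Fin 2 → ℤ, ‖(fun i => (x i : ℝ))‖ = ‖x‖ := by
    intro x
    simp only [Pi.norm_def, Pi.nnnorm_def]
    congr 1
  have ht0 : 0 < t := lt_trans (by norm_num) ht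
  refine Summable.of_norm_bounded_eventually
    (g := fun x : Fin 2 → ℤ => (2 * C) ^ t * ‖x‖ ^ (-t)) ?_ ?_
  · exact (EisensteinSeries.summable_one_div_norm_rpow ht).mul_left _
  · have hproper : Tendsto (fun x : Fin 2 → ℤ => ‖x‖) cofinite atTop := by
      rw [← cocompact_eq_cofinite]
      exact tendsto_norm_cocompact_atTop
    filter_upwards [hproper.eventually (eventually_ge_atTop (2 * C * (‖z₀‖ + 1)))] with x hx
    have hxpos : 0 < ‖x‖ := lt_of_lt_of_le (by positivity) hx
    set v : Fin 2 → ℝ := fun i => (x i : ℝ)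
    have hev : ‖x‖ / C ≤ ‖e v‖ := by
      rw [div_le_iff₀ hC0, mul_comm]
      calc ‖x‖ = ‖v‖ := (hnormx x).symm
        _ ≤ C * ‖e v‖ := hC v
    have hlow : ‖x‖ / (2 * C) ≤ ‖z₀ + ((b.equivFun.symm x : Γ) : ℂ)‖ := by
      rw [hcoe x]
      have h1 : ‖e v‖ - ‖z₀‖ ≤ ‖z₀ + e v‖ := by
        have h := norm_add_le (z₀ + e v) (-z₀)
        have h2 : z₀ + e v + -z₀ = e v := by ring
        rw [h2, norm_neg] at h
        linarith
      have h2 : ‖z₀‖ ≤ ‖x‖ / (2 * C) := by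
        rw [le_div_iff₀ (by positivity)]
        nlinarith [norm_nonneg z₀]
      have h3 : ‖x‖ / C = ‖x‖ / (2 * C) + ‖x‖ / (2 * C) := by field_simp; ring
      linarith
    have hpos2 : 0 < ‖x‖ / (2 * C) := by positivity
    have key : ‖z₀ + ((b.equivFun.symm x : Γ) : ℂ)‖ ^ (-t) ≤ (‖x‖ / (2 * C)) ^ (-t) :=
      Real.rpow_le_rpow_of_nonpos hpos2 hlow (neg_nonpos.mpr ht0.le)
    have heq : (‖x‖ / (2 * C)) ^ (-t) = (2 * C) ^ t * ‖x‖ ^ (-t) := by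
      rw [Real.div_rpow hxpos.le (by positivity), Real.rpow_neg (by positivity : (0:ℝ) ≤ 2 * C)]
      field_simp
    simp only [Function.comp_apply, Equiv.symm_apply_apply]
    rw [Real.norm_of_nonneg (Real.rpow_nonneg (norm_nonneg _) _)]
    calc ‖z₀ + ((b.equivFun.symm x : Γ) : ℂ)‖ ^ (-t)
        ≤ (‖x‖ / (2 * C)) ^ (-t) := key
      _ = (2 * C) ^ t * ‖x‖ ^ (-t) := heq

/-- `A(Γ)` : the area of a fundamental domain of `ℂ/Γ` divided by `π`. -/
noncomputable def latArea (Γ : Submodule ℤ ℂ) : ℝ :=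
  ZLattice.covolume Γ volume / Real.pi

/-- `χ_w(z) := exp((z·conj w − w·conj z)/A(Γ))`. -/
noncomputable def chi (Γ : Submodule ℤ ℂ) (w z : ℂ) : ℂ :=
  Complex.exp ((z * conj w - w * conj z) / (latArea Γ : ℂ))

/-- The Eisenstein–Kronecker–Lerch series `K_a*(z₀, w₀, s; Γ)` converges absolutely
for `Re s > a/2 + 1`. -/
theorem eisensteinKroneckerLerch_summable
    (Γ : Submodule ℤ ℂ) [DiscreteTopology Γ] [IsZLattice ℝ Γ]
    (a : ℤ) (z₀ w₀ : ℂ) (s : ℂ) (hs : (a : ℝ) / 2 + 1 < s.re) :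
    Summable fun γ : {γ : ℂ // γ ∈ Γ ∧ γ ≠ -z₀} =>
      (conj (z₀ + (γ : ℂ))) ^ a * ((‖z₀ + (γ : ℂ)‖ : ℂ)) ^ (-2 * s) *
        chi Γ w₀ (γ : ℂ) := by
  set t : ℝ := 2 * s.re - (a : ℝ) with htdef
  have ht : 2 < t := by simp only [htdef]; linarith
  have base := lattice_summable Γ z₀ ht
  have hsub : Summable fun γ : {γ : ℂ // γ ∈ Γ ∧ γ ≠ -z₀} =>
      ‖z₀ + (γ : ℂ)‖ ^ (-t) :=
    base.comp_injective (i := fun γ : {γ : ℂ // γ ∈ Γ ∧ γ ≠ -z₀} => (⟨γ, γ.2.1⟩ : Γ))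
      (fun γ₁ γ₂ h => by simpa [Subtype.ext_iff] using h)
  refine Summable.of_norm_bounded hsub fun γ => ?_
  set z : ℂ := z₀ + (γ : ℂ) with hzdef
  have hz : z ≠ 0 := by
    intro h
    exact γ.2.2 (by rw [eq_neg_iff_add_eq_zero, add_comm]; exact h)
  have hzpos : 0 < ‖z‖ := norm_pos_iff.mpr hz
  have hchi : ‖chi Γ w₀ (γ : ℂ)‖ = 1 := by
    rw [chi, Complex.norm_exp]
    have : (((γ : ℂ) * conj w₀ - w₀ * conj (γ : ℂ)) / ((latArea Γ : ℝ) : ℂ)).re = 0 := by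
      rw [Complex.div_ofReal_re]
      have : ((γ : ℂ) * conj w₀ - w₀ * conj (γ : ℂ)).re = 0 := by
        simp [Complex.sub_re, Complex.mul_re, Complex.conj_re, Complex.conj_im]
        ring
      rw [this, zero_div]
    rw [this, Real.exp_zero]
  rw [norm_mul, norm_mul]
  have h1 : ‖(conj z) ^ a‖ = ‖z‖ ^ a := by
    rw [norm_zpow, Complex.norm_conj]
  have h2 : ‖((‖z‖ : ℂ)) ^ (-2 * s)‖ = ‖z‖ ^ (-2 * s).re := by
    exact Complex.norm_cpow_eq_rpow_re_of_pos hzpos _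
  rw [h1, h2, hchi, mul_one]
  have h3 : ‖z‖ ^ a = ‖z‖ ^ ((a : ℝ)) := by
    rw [Real.rpow_intCast]
  rw [h3, ← Real.rpow_add hzpos]
  have h4 : (a : ℝ) + (-2 * s).re = -t := by
    simp [htdef, Complex.mul_re]
    ring
  rw [h4]
end

section
/- Let K be an imaginary quadratic field with ring of integers O_K, let σ : K ↪ ℂ be a field embedding, let Ω ∈ ℂ be nonzero, and set Γ := Ω·σ(O_K), a lattice in ℂ. Let α ∈ O_K be nonzero, let S ⊂ ℂ be a complete set of representatives of the finite quotient group (σ(α)^{−1}·Γ)/Γ, and let γ ∈ Γ. Then Σ_{z ∈ S} exp((z·conj(γ) − conj(z)·γ)/A(Γ)) equals N(α) := σ(α)·conj(σ(α)) (the absolute norm of α) if γ ∈ conj(σ(α))·Γ, and equals 0 otherwise. -/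
open Complex MeasureTheory NumberField
open scoped ComplexConjugate

/-- The lattice `Γ := Ω·σ(O_K) ⊂ ℂ`. -/
noncomputable def latOf (K : Type*) [Field K] [NumberField K] (σ : K →+* ℂ) (Ω : ℂ) :
    Submodule ℤ ℂ :=
  Submodule.span ℤ (Set.range fun x : 𝓞 K => Ω * σ (algebraMap (𝓞 K) K x))

open Classical in
/-- Orthogonality of the characters `χ_γ` over a complete set of representatives of
`(σ(α)⁻¹Γ)/Γ` : the sum is `N(α)` if `γ ∈ conj(σ(α))·Γ` and `0` otherwise. -/
theorem sum_char_reps_eq_norm_or_zero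
    (K : Type*) [Field K] [NumberField K]
    (hdeg : Module.finrank ℚ K = 2) (σ : K →+* ℂ) (him : ∃ x : K, (σ x).im ≠ 0)
    (Ω : ℂ) (hΩ : Ω ≠ 0)
    (α : 𝓞 K) (hα : α ≠ 0)
    (S : Finset ℂ)
    (hSmem : ∀ z ∈ S, ∃ x : 𝓞 K,
      σ (algebraMap (𝓞 K) K α) * z = Ω * σ (algebraMap (𝓞 K) K x))
    (hSrep : ∀ w : ℂ, (∃ x : 𝓞 K,
        σ (algebraMap (𝓞 K) K α) * w = Ω * σ (algebraMap (𝓞 K) K x)) →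
      ∃! z, z ∈ S ∧ w - z ∈ latOf K σ Ω)
    (γ : ℂ) (hγ : γ ∈ latOf K σ Ω) :
    ∑ z ∈ S, Complex.exp ((z * conj γ - conj z * γ) / (latArea (latOf K σ Ω) : ℂ)) =
      if ∃ x : 𝓞 K, γ = conj (σ (algebraMap (𝓞 K) K α)) * (Ω * σ (algebraMap (𝓞 K) K x))
      then σ (algebraMap (𝓞 K) K α) * conj (σ (algebraMap (𝓞 K) K α))
      else 0 := by
  classical
  set a : ℂ := σ (algebraMap (𝓞 K) K α) with ha_def
  set f : 𝓞 K → ℂ := fun x => Ω * σ (algebraMap (𝓞 K) K x) with hf_def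
  set Γ : Submodule ℤ ℂ := latOf K σ Ω with hΓ_def
  -- membership description
  let F : 𝓞 K →ₗ[ℤ] ℂ :=
    (LinearMap.mulLeft ℤ Ω).comp ((σ.toIntAlgHom.toLinearMap).comp
      ((algebraMap (𝓞 K) K).toIntAlgHom.toLinearMap))
  have hF : ∀ x : 𝓞 K, F x = f x := fun x => rfl
  have hΓrange : Γ = LinearMap.range F := by
    rw [hΓ_def, latOf, ← Submodule.span_eq (LinearMap.range F), LinearMap.coe_range]
    rfl
  have hmem : ∀ c : ℂ, c ∈ Γ ↔ ∃ x : 𝓞 K, c = f x := by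
    intro c
    rw [hΓrange, LinearMap.mem_range]
    exact ⟨fun ⟨x, hx⟩ => ⟨x, hx.symm⟩, fun ⟨x, hx⟩ => ⟨x, hx.symm⟩⟩
  -- bases
  have hrank : Fintype.card (Module.Free.ChooseBasisIndex ℤ (𝓞 K)) = 2 := by
    rw [← Module.finrank_eq_card_chooseBasisIndex, RingOfIntegers.rank, hdeg]
  let eqv : Module.Free.ChooseBasisIndex ℤ (𝓞 K) ≃ Fin 2 := Fintype.equivFinOfCardEq hrank
  let BO : Module.Basis (Fin 2) ℤ (𝓞 K) := (RingOfIntegers.basis K).reindex eqv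
  let BK : Module.Basis (Fin 2) ℚ K := (NumberField.integralBasis K).reindex eqv
  have hBK : ∀ i, BK i = algebraMap (𝓞 K) K (BO i) := by
    intro i
    simp only [BK, BO, Module.Basis.reindex_apply, NumberField.integralBasis_apply]
  set u : ℂ := σ (algebraMap (𝓞 K) K (BO 0)) with hu_def
  set v : ℂ := σ (algebraMap (𝓞 K) K (BO 1)) with hv_def
  have hu : u ≠ 0 := by
    simp only [hu_def, ne_eq, map_eq_zero, RingOfIntegers.coe_eq_zero_iff]
    exact BO.ne_zero 0
  have hexpand : ∀ k : K, ∃ q0 q1 : ℚ, k = (q0 : K) * BK 0 + (q1 : K) * BK 1 := by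
    intro k
    refine ⟨BK.repr k 0, BK.repr k 1, ?_⟩
    conv_lhs => rw [← BK.sum_repr k]
    rw [Fin.sum_univ_two, Rat.smul_def, Rat.smul_def]
  obtain ⟨x0, hx0⟩ := him
  have hratio : (v / u).im ≠ 0 := by
    intro h
    have h1 : (v / u : ℂ) = (((v / u).re : ℝ) : ℂ) := Complex.ext rfl (by simpa using h)
    have hvr : v = (((v / u).re : ℝ) : ℂ) * u := by
      rw [← h1, div_mul_cancel₀ _ hu]
    set r : ℝ := (v / u).re with hr_def
    have hK : ∀ k : K, ∃ t : ℝ, σ k = (t : ℂ) * u := by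
      intro k
      obtain ⟨q0, q1, hk⟩ := hexpand k
      refine ⟨q0 + q1 * r, ?_⟩
      rw [hk, map_add, map_mul, map_mul, map_ratCast, map_ratCast, hBK 0, hBK 1,
        ← hu_def, ← hv_def, hvr]
      push_cast
      ring
    obtain ⟨t1, h1'⟩ := hK 1
    rw [map_one] at h1'
    have ht1 : t1 ≠ 0 := by
      intro h0
      rw [h0] at h1'
      simp at h1'
    have huim : u.im = 0 := by
      have h2 := congrArg Complex.im h1'
      simp only [Complex.one_im, Complex.mul_im, Complex.ofReal_re, Complex.ofReal_im,
        zero_mul, add_zero] at h2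
      rcases mul_eq_zero.1 h2.symm with h3 | h3
      · exact absurd h3 ht1
      · exact h3
    obtain ⟨t, ht⟩ := hK x0
    apply hx0
    rw [ht]
    simp [Complex.mul_im, huim]
  set e0 : ℂ := Ω * u with he0_def
  set e1 : ℂ := Ω * v with he1_def
  set D : ℝ := (conj e0 * e1).im with hD_def
  have hD : D ≠ 0 := by
    have hcu : conj e0 * e1 = ((Complex.normSq Ω * Complex.normSq u : ℝ) : ℂ) * (v / u) := by
      rw [he0_def, he1_def, Complex.ofReal_mul, ← Complex.mul_conj, ← Complex.mul_conj]
      field_simp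
      rw [map_mul]
      ring
    rw [hD_def, hcu]
    have : (((Complex.normSq Ω * Complex.normSq u : ℝ) : ℂ) * (v / u)).im
        = (Complex.normSq Ω * Complex.normSq u) * (v / u).im := by
      simp [Complex.mul_im]
    rw [this]
    exact mul_ne_zero (mul_ne_zero (Complex.normSq_pos.2 hΩ).ne'
      (Complex.normSq_pos.2 hu).ne') hratio
  have he0 : e0 ≠ 0 := mul_ne_zero hΩ hu
  -- linear independence and real basis
  let vv : Fin 2 → ℂ := ![e0, e1]
  have hli : LinearIndependent ℝ vv := by
    rw [show vv = ![e0, e1] from rfl, LinearIndependent.pair_iff]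
    intro s t hst
    simp only [Complex.real_smul] at hst
    have h0 : (conj e0 * ((s : ℂ) * e0 + (t : ℂ) * e1)).im = 0 := by
      rw [hst, mul_zero]
      rfl
    have him2 : (conj e0 * ((s : ℂ) * e0 + (t : ℂ) * e1)).im = t * D := by
      rw [hD_def]
      simp only [Complex.mul_im, Complex.mul_re, Complex.add_im, Complex.add_re,
        Complex.conj_re, Complex.conj_im, Complex.ofReal_re, Complex.ofReal_im]
      ring
    have ht : t = 0 := by
      rcases mul_eq_zero.1 (him2 ▸ h0) with h3 | h3
      · exact h3
      · exact absurd h3 hD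
    have hs : s = 0 := by
      rw [ht] at hst
      simp only [Complex.ofReal_zero, zero_mul, add_zero] at hst
      rcases mul_eq_zero.1 hst with h3 | h3
      · exact_mod_cast h3
      · exact absurd h3 he0
    exact ⟨hs, ht⟩
  have hfin : Fintype.card (Fin 2) = Module.finrank ℝ ℂ := by
    simp [Complex.finrank_real_complex]
  let Bℝ : Module.Basis (Fin 2) ℝ ℂ := basisOfLinearIndependentOfCardEqFinrank hli hfin
  have hBco : ⇑Bℝ = vv := coe_basisOfLinearIndependentOfCardEqFinrank hli hfin
  have hfi : ∀ i, f (BO i) = vv i := by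
    intro i
    fin_cases i <;> rfl
  have hFv : ∀ i, F (BO i) = vv i := fun i => (hF _).trans (hfi i)
  have hspan : Γ = Submodule.span ℤ (Set.range ⇑Bℝ) := by
    rw [hBco]
    apply le_antisymm
    · rw [hΓ_def, latOf, Submodule.span_le]
      rintro _ ⟨x, rfl⟩
      have hx2 : F x = ∑ i, (BO.repr x i) • vv i := by
        conv_lhs => rw [← BO.sum_repr x]
        rw [map_sum]
        simp_rw [_root_.map_smul, hFv]
      have hx : F x ∈ Submodule.span ℤ (Set.range vv) := by
        rw [hx2]
        exact Submodule.sum_smul_mem _ _ fun i _ => Submodule.subset_span ⟨i, rfl⟩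
      exact hx
    · rw [Submodule.span_le]
      rintro _ ⟨i, rfl⟩
      exact (hmem _).2 ⟨BO i, (hfi i).symm⟩
  have hco : ∀ c : ℂ, c ∈ Γ ↔ ∃ m n : ℤ, c = (m : ℂ) * e0 + (n : ℂ) * e1 := by
    intro c
    rw [hspan, Submodule.mem_span_range_iff_exists_fun]
    constructor
    · rintro ⟨co, hc⟩
      refine ⟨co 0, co 1, ?_⟩
      rw [← hc, Fin.sum_univ_two, hBco]
      simp [vv, zsmul_eq_mul]
    · rintro ⟨m, n, rfl⟩
      refine ⟨![m, n], ?_⟩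
      rw [Fin.sum_univ_two, hBco]
      simp [vv, zsmul_eq_mul]
  -- covolume
  haveI hzl := instIsZLatticeRealSpan Bℝ
  have hvol1 : volume (ZSpan.fundamentalDomain Complex.basisOneI) = 1 := by
    rw [measure_congr (ZSpan.fundamentalDomain_ae_parallelepiped Complex.basisOneI volume)]
    have hpar : parallelepiped ⇑Complex.basisOneI
        = parallelepiped ⇑Complex.orthonormalBasisOneI := by
      rw [← Complex.toBasis_orthonormalBasisOneI, OrthonormalBasis.coe_toBasis]
    rw [hpar]
    exact Complex.orthonormalBasisOneI.volume_parallelepiped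
  have hdet : Complex.basisOneI.det ⇑Bℝ = D := by
    rw [Module.Basis.det_apply, Matrix.det_fin_two, hD_def]
    simp only [Module.Basis.toMatrix_apply, hBco, Complex.coe_basisOneI_repr]
    simp only [Matrix.cons_val_zero, Matrix.cons_val_one, Matrix.head_cons,
      Complex.mul_im, Complex.conj_re, Complex.conj_im]
    show (vv 0).re * (vv 1).im - (vv 1).re * (vv 0).im = _
    simp only [vv, Matrix.cons_val_zero, Matrix.cons_val_one, Matrix.head_cons]
    ring
  have hA : latArea Γ = |D| / Real.pi := by
    rw [latArea, hspan]
    congr 1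
    rw [ZLattice.covolume_eq_measure_fundamentalDomain _ volume
        (ZSpan.isAddFundamentalDomain Bℝ volume), measureReal_def,
      ZSpan.measure_fundamentalDomain Bℝ volume Complex.basisOneI, hvol1, mul_one,
      ENNReal.toReal_ofReal (abs_nonneg _), hdet]
  -- pairing lemmas
  have hpair1 : ∀ lam mu : ℂ, lam ∈ Γ → mu ∈ Γ →
      ∃ n : ℤ, (lam * conj mu).im = n * D := by
    intro lam mu hl hm
    obtain ⟨m1, n1, rfl⟩ := (hco lam).1 hl
    obtain ⟨m2, n2, rfl⟩ := (hco mu).1 hm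
    refine ⟨n1 * m2 - m1 * n2, ?_⟩
    rw [hD_def]
    push_cast
    simp only [map_add, map_mul, map_intCast, Complex.add_im, Complex.add_re,
      Complex.mul_im, Complex.mul_re, Complex.conj_re, Complex.conj_im,
      Complex.intCast_re, Complex.intCast_im]
    ring
  have hpair2 : ∀ c : ℂ,
      (∀ lam, lam ∈ Γ → ∃ n : ℤ, (lam * conj c).im = n * D) → c ∈ Γ := by
    intro c hc
    have he0m : e0 ∈ Γ := (hco e0).2 ⟨1, 0, by push_cast; ring⟩
    have he1m : e1 ∈ Γ := (hco e1).2 ⟨0, 1, by push_cast; ring⟩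
    have hcrep : c = ((Bℝ.repr c 0 : ℝ) : ℂ) * e0 + ((Bℝ.repr c 1 : ℝ) : ℂ) * e1 := by
      conv_lhs => rw [← Bℝ.sum_repr c]
      rw [Fin.sum_univ_two, hBco]
      simp only [vv, Matrix.cons_val_zero, Matrix.cons_val_one, Matrix.head_cons,
        Complex.real_smul]
    set s : ℝ := Bℝ.repr c 0 with hs_def
    set t : ℝ := Bℝ.repr c 1 with ht_def
    obtain ⟨n1, hn1⟩ := hc e1 he1m
    obtain ⟨n0, hn0⟩ := hc e0 he0m
    have h1 : (e1 * conj c).im = s * D := by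
      rw [hcrep, hD_def]
      simp only [map_add, map_mul, Complex.conj_conj, Complex.conj_ofReal,
        Complex.add_im, Complex.add_re, Complex.mul_im, Complex.mul_re,
        Complex.conj_re, Complex.conj_im, Complex.ofReal_re, Complex.ofReal_im]
      ring
    have h0 : (e0 * conj c).im = -t * D := by
      rw [hcrep, hD_def]
      simp only [map_add, map_mul, Complex.conj_conj, Complex.conj_ofReal,
        Complex.add_im, Complex.add_re, Complex.mul_im, Complex.mul_re,
        Complex.conj_re, Complex.conj_im, Complex.ofReal_re, Complex.ofReal_im]
      ring
    have hs : s = n1 := mul_right_cancel₀ hD (h1 ▸ hn1)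
    have ht : t = -n0 := by
      have := mul_right_cancel₀ hD (h0 ▸ hn0)
      linarith
    refine (hco c).2 ⟨n1, -n0, ?_⟩
    rw [hcrep, hs, ht]
    push_cast
    ring
  -- exponential characterization
  have hπc : ((Real.pi : ℝ) : ℂ) ≠ 0 := Complex.ofReal_ne_zero.2 Real.pi_ne_zero
  have hAc : ((|D| / Real.pi : ℝ) : ℂ) ≠ 0 := by
    rw [Complex.ofReal_ne_zero]
    exact div_ne_zero (abs_ne_zero.2 hD) Real.pi_ne_zero
  have hexp_iff : ∀ z w : ℂ,
      Complex.exp ((z * conj w - conj z * w) / ((|D| / Real.pi : ℝ) : ℂ)) = 1 ↔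
      ∃ n : ℤ, (z * conj w).im = n * D := by
    intro z w
    have hnum : z * conj w - conj z * w = (((z * conj w).im : ℝ) : ℂ) * (2 * I) := by
      have h1 : conj z * w = conj (z * conj w) := by
        rw [map_mul, Complex.conj_conj]
      rw [h1, Complex.sub_conj]
      push_cast
      ring
    rw [hnum, Complex.exp_eq_one_iff]
    have h2I : (2 : ℂ) * I ≠ 0 := by
      simp [Complex.I_ne_zero]
    constructor
    · rintro ⟨m, hm⟩
      rw [div_eq_iff hAc] at hm
      have hre : ((z * conj w).im : ℝ) = m * |D| := by
        have h2 : (((z * conj w).im : ℝ) : ℂ) * (2 * I) = ((m * |D| : ℝ) : ℂ) * (2 * I) := by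
          rw [hm]
          push_cast
          field_simp
        exact_mod_cast mul_right_cancel₀ h2I h2
      rcases abs_cases D with ⟨hD1, _⟩ | ⟨hD1, _⟩
      · exact ⟨m, by rw [hre, hD1]⟩
      · exact ⟨-m, by rw [hre, hD1]; push_cast; ring⟩
    · rintro ⟨n, hn⟩
      rcases abs_cases D with ⟨hD1, _⟩ | ⟨hD1, _⟩
      · refine ⟨n, ?_⟩
        rw [div_eq_iff hAc, hn, hD1]
        push_cast
        field_simp
      · refine ⟨-n, ?_⟩
        rw [div_eq_iff hAc, hn, hD1]
        push_cast
        field_simp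
  -- nonvanishing
  have haz : a ≠ 0 := by
    simp only [ha_def, ne_eq, map_eq_zero, RingOfIntegers.coe_eq_zero_iff]
    exact hα
  have hinj : ∀ x y : 𝓞 K, f x = f y → x = y := by
    intro x y h
    simp only [hf_def] at h
    exact RingOfIntegers.coe_injective (σ.injective (mul_left_cancel₀ hΩ h))
  have hfsub : ∀ x y : 𝓞 K, f x - f y = f (x - y) := by
    intro x y
    simp only [hf_def, map_sub, mul_sub]
  have hfmul : ∀ t : 𝓞 K, f (α * t) = a * f t := by
    intro t
    simp only [hf_def, ha_def, map_mul]
    ring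
  -- cardinality of S
  have hcard : (S.card : ℂ) = a * conj a := by
    let σ' : K →ₐ[ℚ] ℂ := σ.toRatAlgHom
    let τ : K →ₐ[ℚ] ℂ := ((starRingEnd ℂ).comp σ).toRatAlgHom
    have hστ : σ' ≠ τ := by
      intro h
      apply hx0
      have h2 : σ x0 = starRingEnd ℂ (σ x0) := DFunLike.congr_fun h x0
      exact Complex.conj_eq_iff_im.1 h2.symm
    have hcard2 : Fintype.card (K →ₐ[ℚ] ℂ) = 2 := by
      rw [AlgHom.card, hdeg]
    have huniv : (Finset.univ : Finset (K →ₐ[ℚ] ℂ)) = {σ', τ} := by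
      symm
      apply Finset.eq_of_subset_of_card_le (Finset.subset_univ _)
      rw [Finset.card_univ, hcard2,
        Finset.card_insert_of_notMem (by simp [hστ]), Finset.card_singleton]
    have hprod : (algebraMap ℚ ℂ) (Algebra.norm ℚ (algebraMap (𝓞 K) K α)) = a * conj a := by
      rw [Algebra.norm_eq_prod_embeddings, huniv, Finset.prod_pair hστ]
      rfl
    have hNQ : ((Algebra.norm ℤ α : ℤ) : ℚ) = Algebra.norm ℚ (algebraMap (𝓞 K) K α) :=
      Algebra.coe_norm_int α
    have hNc : ((Algebra.norm ℤ α : ℤ) : ℂ) = a * conj a := by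
      rw [← hprod, ← hNQ]
      rw [eq_ratCast (algebraMap ℚ ℂ)]
      push_cast
      ring
    have hNpos : 0 < Algebra.norm ℤ α := by
      have h3 : 0 < Complex.normSq a := Complex.normSq_pos.2 haz
      have h2 : ((Algebra.norm ℤ α : ℤ) : ℝ) = Complex.normSq a := by
        have h4 := hNc
        rw [Complex.mul_conj] at h4
        exact_mod_cast h4
      have h5 : (0 : ℝ) < ((Algebra.norm ℤ α : ℤ) : ℝ) := h2 ▸ h3
      exact_mod_cast h5
    have hquot : Nat.card ((𝓞 K) ⧸ Ideal.span {α}) = (Algebra.norm ℤ α).natAbs := by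
      rw [← Ideal.absNorm_span_singleton, Ideal.absNorm_apply, Submodule.cardQuot_apply]
    have hbij : S.card = Nat.card ((𝓞 K) ⧸ Ideal.span {α}) := by
      have hxz : ∀ z : {z // z ∈ S}, ∃ x : 𝓞 K, a * (z : ℂ) = f x := fun z => hSmem z z.2
      choose xz hxzspec using hxz
      let g : {z // z ∈ S} → (𝓞 K) ⧸ Ideal.span {α} := fun z => Ideal.Quotient.mk _ (xz z)
      have hginj : Function.Injective g := by
        intro z z' h
        have h2 : xz z - xz z' ∈ Ideal.span ({α} : Set (𝓞 K)) := Ideal.Quotient.eq.1 h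
        obtain ⟨t, ht⟩ := (Ideal.mem_span_singleton.1 h2)
        have h3 : a * (z : ℂ) - a * (z' : ℂ) = a * f t := by
          rw [hxzspec z, hxzspec z', hfsub, ht, hfmul]
        rw [← mul_sub] at h3
        have h5 : (z : ℂ) - (z' : ℂ) = f t := mul_left_cancel₀ haz h3
        have h4 : (z : ℂ) - (z' : ℂ) ∈ Γ := (hmem _).2 ⟨t, h5⟩
        have h6 := (hSrep (z : ℂ) ⟨xz z, hxzspec z⟩).unique
          ⟨z.2, by simp⟩ ⟨z'.2, h4⟩
        exact Subtype.ext h6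
      have hgsurj : Function.Surjective g := by
        intro q
        obtain ⟨x, rfl⟩ := Ideal.Quotient.mk_surjective q
        have hex : ∃ y : 𝓞 K, a * (f x / a) = f y := ⟨x, by field_simp⟩
        obtain ⟨z, ⟨hzS, hzΓ⟩, -⟩ := hSrep (f x / a) hex
        refine ⟨⟨z, hzS⟩, ?_⟩
        obtain ⟨t, ht⟩ := (hmem _).1 hzΓ
        have h7 : f x - a * z = a * f t := by
          field_simp at ht
          linear_combination ht
        have h8 : f x - f (xz ⟨z, hzS⟩) = f (α * t) := by
          rw [← hxzspec ⟨z, hzS⟩, hfmul]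
          exact h7
        rw [hfsub] at h8
        have h9 : x - xz ⟨z, hzS⟩ = α * t := hinj _ _ h8
        have h10 : xz ⟨z, hzS⟩ - x ∈ Ideal.span ({α} : Set (𝓞 K)) := by
          rw [Ideal.mem_span_singleton]
          exact ⟨-t, by rw [mul_neg, ← h9]; ring⟩
        exact Ideal.Quotient.eq.2 h10
      have h11 := Nat.card_eq_of_bijective g ⟨hginj, hgsurj⟩
      rw [← h11, Nat.card_eq_finsetCard]
    rw [hbij, hquot, ← hNc]
    have h5 : ((Algebra.norm ℤ α).natAbs : ℤ) = Algebra.norm ℤ α :=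
      Int.natAbs_of_nonneg hNpos.le
    have h6 : (((Algebra.norm ℤ α).natAbs : ℤ) : ℂ) = ((Algebra.norm ℤ α : ℤ) : ℂ) :=
      congrArg (fun m : ℤ => (m : ℂ)) h5
    rw [Int.cast_natCast] at h6
    exact h6
  -- main case split
  by_cases hcase : ∃ x : 𝓞 K, γ = conj a * (Ω * σ (algebraMap (𝓞 K) K x))
  · rw [if_pos hcase]
    obtain ⟨y0, hy0⟩ := hcase
    simp only [hA]
    have hterm : ∀ z ∈ S,
        Complex.exp ((z * conj γ - conj z * γ) / ((|D| / Real.pi : ℝ) : ℂ)) = 1 := by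
      intro z hz
      obtain ⟨xz, hxz⟩ := hSmem z hz
      apply (hexp_iff z γ).2
      have hzz : z * conj γ = (Ω * σ (algebraMap (𝓞 K) K xz)) *
          conj (Ω * σ (algebraMap (𝓞 K) K y0)) := by
        rw [hy0, map_mul, Complex.conj_conj, ← hxz]
        ring
      rw [hzz]
      exact hpair1 _ _ ((hmem _).2 ⟨xz, rfl⟩) ((hmem _).2 ⟨y0, rfl⟩)
    rw [Finset.sum_congr rfl hterm, Finset.sum_const, nsmul_eq_mul, mul_one]
    exact hcard
  · rw [if_neg hcase]
    simp only [hA]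
    have hγ' : γ ∈ Γ := hγ
    have hfadd : ∀ x y : 𝓞 K, f x + f y = f (x + y) := by
      intro x y
      simp only [hf_def, map_add, mul_add]
    have hE1 : ∀ δ : ℂ, δ ∈ Γ →
        Complex.exp ((δ * conj γ - conj δ * γ) / ((|D| / Real.pi : ℝ) : ℂ)) = 1 := fun δ hδ =>
      (hexp_iff δ γ).2 (hpair1 δ γ hδ hγ')
    have hwit : ∃ w : ℂ, (∃ x : 𝓞 K, a * w = f x) ∧
        Complex.exp ((w * conj γ - conj w * γ) / ((|D| / Real.pi : ℝ) : ℂ)) ≠ 1 := by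
      by_contra hcon
      push_neg at hcon
      apply hcase
      have hcΓ : γ / conj a ∈ Γ := by
        apply hpair2
        intro lam hlam
        obtain ⟨xl, hxl⟩ := (hmem lam).1 hlam
        have hwx : a * (lam / a) = f xl := by
          rw [mul_comm, div_mul_cancel₀ lam haz]
          exact hxl.symm ▸ hxl
        have h1 := hcon (lam / a) ⟨xl, hwx⟩
        obtain ⟨n, hn⟩ := (hexp_iff _ _).1 h1
        refine ⟨n, ?_⟩
        rw [← hn]
        congr 1
        rw [map_div₀, Complex.conj_conj]
        ring
      obtain ⟨x, hx⟩ := (hmem _).1 hcΓ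
      refine ⟨x, ?_⟩
      have hca : conj a ≠ 0 := by
        simpa using haz
      rw [div_eq_iff hca] at hx
      rw [hx]
      exact mul_comm (f x) (conj a)
    obtain ⟨w₀, hw₀ex, hw₀⟩ := hwit
    obtain ⟨xw, hxw⟩ := hw₀ex
    let rep : ℂ → ℂ := fun w =>
      if h : ∃ x : 𝓞 K, a * w = f x then ((hSrep w h).exists).choose else 0
    have hrep : ∀ w : ℂ, (∃ x : 𝓞 K, a * w = f x) → rep w ∈ S ∧ w - rep w ∈ Γ := by
      intro w h
      have hs := ((hSrep w h).exists).choose_spec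
      simp only [rep, dif_pos h]
      exact hs
    have hrepu : ∀ w z : ℂ, (∃ x : 𝓞 K, a * w = f x) → z ∈ S → w - z ∈ Γ → rep w = z := by
      intro w z h hz hwz
      have h1 := hrep w h
      exact ExistsUnique.unique (hSrep w h) ⟨h1.1, h1.2⟩ ⟨hz, hwz⟩
    have hEadd : ∀ z w' : ℂ, ((z + w') * conj γ - conj (z + w') * γ) =
        (z * conj γ - conj z * γ) + (w' * conj γ - conj w' * γ) := by
      intro z w'
      rw [map_add]
      ring
    have hexS : ∀ z ∈ S, ∃ x : 𝓞 K, a * (w₀ + z) = f x := by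
      intro z hz
      obtain ⟨xz, hxz⟩ := hSmem z hz
      have hxz' : a * z = f xz := hxz
      exact ⟨xw + xz, by rw [mul_add, hxw, hxz', hfadd]⟩
    have hexS' : ∀ z ∈ S, ∃ x : 𝓞 K, a * (z - w₀) = f x := by
      intro z hz
      obtain ⟨xz, hxz⟩ := hSmem z hz
      have hxz' : a * z = f xz := hxz
      exact ⟨xz - xw, by rw [mul_sub, hxw, hxz', hfsub]⟩
    have hkey : Complex.exp ((w₀ * conj γ - conj w₀ * γ) / ((|D| / Real.pi : ℝ) : ℂ)) *
        ∑ z ∈ S, Complex.exp ((z * conj γ - conj z * γ) / ((|D| / Real.pi : ℝ) : ℂ)) =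
        ∑ z ∈ S, Complex.exp ((z * conj γ - conj z * γ) / ((|D| / Real.pi : ℝ) : ℂ)) := by
      rw [Finset.mul_sum]
      have step1 : ∀ z ∈ S,
          Complex.exp ((w₀ * conj γ - conj w₀ * γ) / ((|D| / Real.pi : ℝ) : ℂ)) *
            Complex.exp ((z * conj γ - conj z * γ) / ((|D| / Real.pi : ℝ) : ℂ)) =
          Complex.exp (((rep (w₀ + z)) * conj γ - conj (rep (w₀ + z)) * γ) /
            ((|D| / Real.pi : ℝ) : ℂ)) := by
        intro z hz
        obtain ⟨hrS, hrΓ⟩ := hrep _ (hexS z hz)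
        have hsplit : w₀ + z = rep (w₀ + z) + (w₀ + z - rep (w₀ + z)) := by ring
        rw [← Complex.exp_add, ← add_div, ← hEadd w₀ z]
        conv_lhs => rw [hsplit]
        rw [hEadd, add_div, Complex.exp_add, hE1 _ hrΓ, mul_one]
      rw [Finset.sum_congr rfl step1]
      refine Finset.sum_nbij' (fun z => rep (w₀ + z)) (fun z => rep (z - w₀)) ?_ ?_ ?_ ?_ ?_
      · intro z hz
        exact (hrep _ (hexS z hz)).1
      · intro z hz
        exact (hrep _ (hexS' z hz)).1
      · intro z hz
        obtain ⟨hrS, hrΓ⟩ := hrep _ (hexS z hz)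
        apply hrepu _ _ (hexS' _ hrS) hz
        have h2 : rep (w₀ + z) - w₀ - z = -(w₀ + z - rep (w₀ + z)) := by ring
        rw [h2]
        exact neg_mem hrΓ
      · intro z hz
        obtain ⟨hrS, hrΓ⟩ := hrep _ (hexS' z hz)
        apply hrepu _ _ (hexS _ hrS) hz
        have h2 : w₀ + rep (z - w₀) - z = -(z - w₀ - rep (z - w₀)) := by ring
        rw [h2]
        exact neg_mem hrΓ
      · intro z hz
        rfl
    have hzero : (Complex.exp ((w₀ * conj γ - conj w₀ * γ) / ((|D| / Real.pi : ℝ) : ℂ)) - 1) *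
        ∑ z ∈ S, Complex.exp ((z * conj γ - conj z * γ) / ((|D| / Real.pi : ℝ) : ℂ)) = 0 := by
      rw [sub_mul, one_mul, hkey, sub_self]
    rcases mul_eq_zero.1 hzero with h | h
    · exact absurd (sub_eq_zero.1 h) hw₀
    · exact h
end

section
/- Let K be an imaginary quadratic field with ring of integers O_K, let σ : K ↪ ℂ be a field embedding, let Ω ∈ ℂ be nonzero, and set Γ := Ω·σ(O_K), a lattice in ℂ. Let α ∈ O_K be nonzero, let a, b be integers with a ≥ 0 and b ≥ a + 3, let z ∈ ℂ with σ(α)·z ∉ Γ, and let S ⊂ ℂ be a complete set of representatives of the finite quotient group (σ(α)^{−1}·Γ)/Γ. Then all the following series converge absolutely and Σ_{z₀ ∈ S} Σ_{γ ∈ Γ} conj(z + z₀ + γ)^a / (z + z₀ + γ)^b = conj(σ(α))^{−a} · σ(α)^{b} · Σ_{γ ∈ Γ} conj(σ(α)z + γ)^a / (σ(α)z + γ)^b. (This is the distribution relation of the classical Eisenstein–Kronecker series in the region of absolute convergence.) -/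
open Complex MeasureTheory NumberField
open scoped ComplexConjugate

open Module

section aux
variable (K : Type*) [Field K] [NumberField K] (σ : K →+* ℂ) (Ω : ℂ)

/-- `x ↦ Ω·σ(x)` as a `ℤ`-linear map. -/
noncomputable def latMap : 𝓞 K →ₗ[ℤ] ℂ where
  toFun x := Ω * σ (algebraMap (𝓞 K) K x)
  map_add' x y := by simp [mul_add]
  map_smul' n x := by
    simp only [zsmul_eq_mul, map_mul, map_intCast, RingHom.id_apply]
    ring

lemma latOf_eq_range : latOf K σ Ω = LinearMap.range (latMap K σ Ω) := by
  have h : (Set.range fun x : 𝓞 K => Ω * σ (algebraMap (𝓞 K) K x))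
      = ↑(LinearMap.range (latMap K σ Ω)) := by
    rw [LinearMap.coe_range]; rfl
  rw [latOf, h, Submodule.span_eq]

lemma mem_latOf_iff {c : ℂ} :
    c ∈ latOf K σ Ω ↔ ∃ x : 𝓞 K, c = Ω * σ (algebraMap (𝓞 K) K x) := by
  rw [latOf_eq_range, LinearMap.mem_range]
  constructor
  · rintro ⟨x, rfl⟩; exact ⟨x, rfl⟩
  · rintro ⟨x, rfl⟩; exact ⟨x, rfl⟩

end aux

section sum
variable {K : Type*} [Field K] [NumberField K] {σ : K →+* ℂ} {Ω : ℂ}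

lemma sigma_mem_span (x : K) :
    σ x ∈ Submodule.span ℝ (Set.range fun i => σ (integralBasis K i)) := by
  rw [← (integralBasis K).sum_repr x, map_sum]
  refine Submodule.sum_mem _ fun i _ => ?_
  have h : σ ((integralBasis K).repr x i • integralBasis K i)
      = ((integralBasis K).repr x i : ℝ) • σ (integralBasis K i) := by
    rw [Rat.smul_def, map_mul, map_ratCast, Complex.real_smul]
    norm_num
  rw [h]
  exact Submodule.smul_mem _ _ (Submodule.subset_span ⟨i, rfl⟩)

lemma indep_one_sigma {x₀ : K} (hx₀ : (σ x₀).im ≠ 0) :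
    LinearIndependent ℝ ![(1 : ℂ), σ x₀] := by
  rw [LinearIndependent.pair_iff']
  · intro s hs
    apply hx₀
    have := congrArg Complex.im hs
    simpa using this.symm
  · exact one_ne_zero

lemma sigma_integralBasis_indep (hdeg : Module.finrank ℚ K = 2)
    (him : ∃ x : K, (σ x).im ≠ 0) :
    LinearIndependent ℝ (fun i => σ (integralBasis K i)) := by
  obtain ⟨x₀, hx₀⟩ := him
  have hcard : Fintype.card (Free.ChooseBasisIndex ℤ (𝓞 K)) = Module.finrank ℝ ℂ := by
    rw [← Module.finrank_eq_card_chooseBasisIndex, RingOfIntegers.rank, hdeg,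
      Complex.finrank_real_complex]
  have htop : ⊤ ≤ Submodule.span ℝ (Set.range fun i => σ (integralBasis K i)) := by
    have h2 : Submodule.span ℝ (Set.range ![(1:ℂ), σ x₀]) = ⊤ := by
      apply LinearIndependent.span_eq_top_of_card_eq_finrank (indep_one_sigma hx₀)
      simp [Complex.finrank_real_complex]
    rw [← h2]
    apply Submodule.span_le.2
    rintro c ⟨i, rfl⟩
    fin_cases i
    · simpa using sigma_mem_span (σ := σ) 1
    · exact sigma_mem_span x₀
  have hB := coe_basisOfTopLeSpanOfCardEqFinrank _ htop hcard
  rw [← hB]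
  exact (basisOfTopLeSpanOfCardEqFinrank _ htop hcard).linearIndependent

end sum

set_option linter.unusedSectionVars false

section sum2
variable {K : Type*} [Field K] [NumberField K] {σ : K →+* ℂ} {Ω : ℂ}

lemma latOf_rpow_summable (hdeg : Module.finrank ℚ K = 2)
    (him : ∃ x : K, (σ x).im ≠ 0) (hΩ : Ω ≠ 0) {k : ℝ} (hk : 2 < k) (w : ℂ) :
    Summable fun γ : latOf K σ Ω => ‖w + (γ : ℂ)‖ ^ (-k) := by
  classical
  set ι := Module.Free.ChooseBasisIndex ℤ (𝓞 K) with hι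
  have hcard2 : Fintype.card ι = 2 := by
    rw [← Module.finrank_eq_card_chooseBasisIndex, RingOfIntegers.rank, hdeg]
  have hcard : Fintype.card ι = Module.finrank ℝ ℂ := by
    rw [hcard2, Complex.finrank_real_complex]
  set e := RingOfIntegers.basis K
  set v : ι → ℂ := fun i => Ω * σ (algebraMap (𝓞 K) K (e i)) with hv
  -- ℝ-linear independence of v
  have hindσ : LinearIndependent ℝ (fun i => σ (integralBasis K i)) :=
    sigma_integralBasis_indep hdeg him
  have hindℝ : LinearIndependent ℝ v := by
    have := hindσ.map' (LinearMap.mulLeft ℝ Ω)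
      (LinearMap.ker_eq_bot.2 (mul_right_injective₀ hΩ))
    have heq : (⇑(LinearMap.mulLeft ℝ Ω) ∘ fun i => σ (integralBasis K i)) = v := by
      funext i; simp [hv, integralBasis_apply]; exact Or.inl rfl
    rwa [heq] at this
  have hindℤ : LinearIndependent ℤ v :=
    hindℝ.restrict_scalars (by intro x y h; simp only [zsmul_eq_mul, mul_one] at h; exact_mod_cast h)
  have hspan : latOf K σ Ω = Submodule.span ℤ (Set.range v) := by
    rw [latOf_eq_range, LinearMap.range_eq_map, ← e.span_eq, Submodule.map_span,
      ← Set.range_comp]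
    rfl
  set B : Basis ι ℤ (Submodule.span ℤ (Set.range v)) := Basis.span hindℤ with hB
  set Bℝ : Basis ι ℝ ℂ := basisOfLinearIndependentOfCardEqFinrank hindℝ hcard with hBℝ
  obtain ⟨C, hCpos, hC⟩ : ∃ C, 0 < C ∧ ∀ x : ℂ, ‖Bℝ.equivFun x‖ ≤ C * ‖x‖ :=
    (LinearMap.toContinuousLinearMap Bℝ.equivFun.toLinearMap).bound
  set q : ↥(Submodule.span ℤ (Set.range v)) ≃ (ι → ℤ) :=
    B.repr.toEquiv.trans Finsupp.equivFunOnFinite with hq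
  have hnorm : ∀ m : ι → ℤ, ‖(fun i => (m i : ℝ))‖ = ‖m‖ := by
    intro m
    refine le_antisymm ?_ ?_
    · refine (pi_norm_le_iff_of_nonneg (norm_nonneg m)).2 fun i => ?_
      rw [Int.norm_cast_real]
      exact norm_le_pi_norm m i
    · refine (pi_norm_le_iff_of_nonneg (norm_nonneg _)).2 fun i => ?_
      rw [← Int.norm_cast_real]
      exact norm_le_pi_norm (fun i => (m i : ℝ)) i
  have hTγ : ∀ γ : ↥(Submodule.span ℤ (Set.range v)),
      (fun i => ((q γ) i : ℝ)) = Bℝ.equivFun (γ : ℂ) := by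
    intro γ
    have h1 : ((γ : ℂ)) = Bℝ.equivFun.symm (fun i => ((q γ) i : ℝ)) := by
      rw [Basis.equivFun_symm_apply]
      have h2 : ((∑ i, B.repr γ i • B i : ↥(Submodule.span ℤ (Set.range v))) : ℂ)
          = (γ : ℂ) := congrArg _ (B.sum_repr γ)
      rw [← h2]
      push_cast
      refine Finset.sum_congr rfl fun i _ => ?_
      rw [hB, Basis.span_apply, hBℝ, coe_basisOfLinearIndependentOfCardEqFinrank]
      have : (q γ) i = B.repr γ i := rfl
      rw [this]
      push_cast [zsmul_eq_mul, Complex.real_smul]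
      ring
    rw [h1, LinearEquiv.apply_symm_apply]
  have key : ∀ γ : ↥(Submodule.span ℤ (Set.range v)), ‖q γ‖ ≤ C * ‖(γ : ℂ)‖ := by
    intro γ
    calc ‖q γ‖ = ‖(fun i => ((q γ) i : ℝ))‖ := (hnorm _).symm
    _ = ‖Bℝ.equivFun (γ : ℂ)‖ := by rw [hTγ]
    _ ≤ C * ‖(γ : ℂ)‖ := hC _
  have hbase : Summable fun m : ι → ℤ => ‖m‖ ^ (-k) := by
    let e2 : ι ≃ Fin 2 := Fintype.equivFinOfCardEq hcard2
    let E : (Fin 2 → ℤ) ≃ (ι → ℤ) := Equiv.arrowCongr e2.symm (Equiv.refl ℤ)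
    rw [← E.summable_iff]
    have hEn : ∀ n : Fin 2 → ℤ, ‖E n‖ = ‖n‖ := by
      intro n
      have hEni : ∀ i, E n i = n (e2 i) := fun i => rfl
      refine le_antisymm ?_ ?_
      · refine (pi_norm_le_iff_of_nonneg (norm_nonneg n)).2 fun i => ?_
        rw [hEni]; exact norm_le_pi_norm n (e2 i)
      · refine (pi_norm_le_iff_of_nonneg (norm_nonneg _)).2 fun i => ?_
        have := norm_le_pi_norm (E n) (e2.symm i)
        rwa [hEni, Equiv.apply_symm_apply] at this
    refine (EisensteinSeries.summable_one_div_norm_rpow hk).congr fun n => ?_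
    simp only [Function.comp_apply, hEn]
  have hfinZ : ∀ R : ℝ, {x : ℤ | |(x : ℝ)| ≤ R}.Finite := by
    intro R
    refine (Set.finite_Icc (⌈-R⌉) ⌊R⌋).subset fun x hx => ?_
    simp only [Set.mem_setOf_eq, abs_le] at hx
    exact Set.mem_Icc.2 ⟨Int.ceil_le.2 hx.1, Int.le_floor.2 hx.2⟩
  have hfin : ∀ R : ℝ, {m : ι → ℤ | ‖m‖ ≤ R}.Finite := by
    intro R
    refine (Set.Finite.pi fun i : ι => hfinZ R).subset fun m hm => ?_
    intro i _
    simp only [Set.mem_setOf_eq] at hm ⊢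
    have := norm_le_pi_norm m i
    rw [Int.norm_eq_abs] at this
    exact_mod_cast this.trans hm
  rw [hspan, ← Equiv.summable_iff q.symm]
  refine Summable.of_norm_bounded_eventually (g := fun m => (2 * C) ^ k * ‖m‖ ^ (-k))
    (hbase.mul_left _) ?_
  rw [Filter.eventually_cofinite]
  refine (hfin (C * (2 * ‖w‖ + 2))).subset fun m hm => ?_
  simp only [Set.mem_setOf_eq] at hm ⊢
  by_contra hR
  apply hm
  push_neg at hR
  set c : ℂ := ((q.symm m : ↥(Submodule.span ℤ (Set.range v))) : ℂ) with hc
  have hqm : ‖m‖ ≤ C * ‖c‖ := by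
    have := key (q.symm m)
    rwa [Equiv.apply_symm_apply] at this
  have h2C : (0:ℝ) < 2 * C := by linarith
  have hw2 : ‖w‖ * (2 * C) ≤ ‖m‖ := by nlinarith [norm_nonneg w]
  have hcl : ‖m‖ / C - ‖w‖ ≤ ‖w + c‖ := by
    have h3 : ‖c‖ ≤ ‖w + c‖ + ‖w‖ := by
      have := norm_add_le (w + c) (-w)
      simpa using this
    have h4 : ‖m‖ / C ≤ ‖c‖ := (div_le_iff₀ hCpos).2 (by linarith)
    linarith
  have hlow : ‖m‖ / (2 * C) ≤ ‖w + c‖ := by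
    have h5 : ‖w‖ ≤ ‖m‖ / (2 * C) := (le_div_iff₀ h2C).2 hw2
    have h6 : ‖m‖ / C - ‖m‖ / (2 * C) = ‖m‖ / (2 * C) := by
      field_simp
      ring
    linarith
  have hpos : 0 < ‖m‖ / (2 * C) := by
    have : 0 < ‖m‖ := by nlinarith [norm_nonneg w]
    positivity
  have hb1 : ‖w + c‖ ^ (-k) ≤ (‖m‖ / (2 * C)) ^ (-k) :=
    Real.rpow_le_rpow_of_nonpos hpos hlow (by linarith)
  have hb2 : (‖m‖ / (2 * C)) ^ (-k) = (2 * C) ^ k * ‖m‖ ^ (-k) := by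
    rw [Real.div_rpow (norm_nonneg _) (le_of_lt h2C),
      Real.rpow_neg (le_of_lt h2C) k, div_eq_mul_inv, inv_inv, mul_comm]
  calc ‖(fun γ : ↥(Submodule.span ℤ (Set.range v)) => ‖w + (γ:ℂ)‖ ^ (-k)) (q.symm m)‖
      = ‖w + c‖ ^ (-k) := Real.norm_of_nonneg (Real.rpow_nonneg (norm_nonneg _) _)
  _ ≤ (‖m‖ / (2 * C)) ^ (-k) := hb1
  _ = (2 * C) ^ k * ‖m‖ ^ (-k) := hb2


lemma latOf_summable (hdeg : Module.finrank ℚ K = 2)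
    (him : ∃ x : K, (σ x).im ≠ 0) (hΩ : Ω ≠ 0) {a b : ℤ} (ha : 0 ≤ a)
    (hb : a + 3 ≤ b) (w : ℂ) :
    Summable fun γ : latOf K σ Ω =>
      conj (w + (γ : ℂ)) ^ a / (w + (γ : ℂ)) ^ b := by
  have hk2 : 2 < ((b : ℝ) - a) := by
    have : (a:ℝ) + 3 ≤ b := by exact_mod_cast hb
    linarith
  apply Summable.of_norm
  refine (latOf_rpow_summable hdeg him hΩ hk2 w).of_nonneg_of_le
    (fun γ => norm_nonneg _) (fun γ => ?_)
  set x := w + (γ : ℂ) with hx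
  by_cases hx0 : x = 0
  · rw [hx0]
    have hb0 : b ≠ 0 := by omega
    rw [zero_zpow _ hb0, div_zero, norm_zero]
    positivity
  · have hxp : 0 < ‖x‖ := norm_pos_iff.2 hx0
    rw [norm_div, norm_zpow, norm_zpow, RCLike.norm_conj,
      ← Real.rpow_intCast ‖x‖ a, ← Real.rpow_intCast ‖x‖ b, ← Real.rpow_sub hxp]
    apply le_of_eq
    congr 1
    ring

lemma latOf_mul_mem {c : ℂ} (α : 𝓞 K) (hc : c ∈ latOf K σ Ω) :
    σ (algebraMap (𝓞 K) K α) * c ∈ latOf K σ Ω := by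
  rw [mem_latOf_iff] at hc ⊢
  obtain ⟨x, rfl⟩ := hc
  exact ⟨α * x, by rw [map_mul, map_mul]; ring⟩

lemma term_scale {A : ℂ} (hA : A ≠ 0) {a b : ℤ} {t : ℂ} (ht : t ≠ 0) :
    conj t ^ a / t ^ b
      = conj A ^ (-a) * A ^ b * (conj (A * t) ^ a / (A * t) ^ b) := by
  have hcA : (conj A : ℂ) ≠ 0 := by simpa using hA
  have h1 : (conj A : ℂ) ^ a ≠ 0 := zpow_ne_zero _ hcA
  have h2 : A ^ b ≠ 0 := zpow_ne_zero _ hA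
  have h3 : t ^ b ≠ 0 := zpow_ne_zero _ ht
  rw [map_mul, mul_zpow, mul_zpow, mul_div_mul_comm, zpow_neg]
  field_simp

end sum2


/-- The distribution relation for the classical Eisenstein–Kronecker series in the
region of absolute convergence:
`Σ_{z₀ ∈ S} Σ_{γ ∈ Γ} conj(z+z₀+γ)^a/(z+z₀+γ)^b
  = conj(σα)^{−a}·σα^{b}·Σ_{γ ∈ Γ} conj(σα·z+γ)^a/(σα·z+γ)^b`. -/
theorem eisensteinKronecker_distribution_relation
    (K : Type*) [Field K] [NumberField K]
    (hdeg : Module.finrank ℚ K = 2) (σ : K →+* ℂ) (him : ∃ x : K, (σ x).im ≠ 0)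
    (Ω : ℂ) (hΩ : Ω ≠ 0)
    (α : 𝓞 K) (hα : α ≠ 0)
    (a b : ℤ) (ha : 0 ≤ a) (hb : a + 3 ≤ b)
    (z : ℂ) (hz : σ (algebraMap (𝓞 K) K α) * z ∉ latOf K σ Ω)
    (S : Finset ℂ)
    (hSmem : ∀ z₀ ∈ S, ∃ x : 𝓞 K,
      σ (algebraMap (𝓞 K) K α) * z₀ = Ω * σ (algebraMap (𝓞 K) K x))
    (hSrep : ∀ w : ℂ, (∃ x : 𝓞 K,
        σ (algebraMap (𝓞 K) K α) * w = Ω * σ (algebraMap (𝓞 K) K x)) →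
      ∃! z₀, z₀ ∈ S ∧ w - z₀ ∈ latOf K σ Ω) :
    (∀ z₀ ∈ S, Summable fun γ : latOf K σ Ω =>
        conj (z + z₀ + (γ : ℂ)) ^ a / (z + z₀ + (γ : ℂ)) ^ b) ∧
    (Summable fun γ : latOf K σ Ω =>
        conj (σ (algebraMap (𝓞 K) K α) * z + (γ : ℂ)) ^ a /
          (σ (algebraMap (𝓞 K) K α) * z + (γ : ℂ)) ^ b) ∧
    ∑ z₀ ∈ S, ∑' γ : latOf K σ Ω, conj (z + z₀ + (γ : ℂ)) ^ a / (z + z₀ + (γ : ℂ)) ^ b =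
      conj (σ (algebraMap (𝓞 K) K α)) ^ (-a) * σ (algebraMap (𝓞 K) K α) ^ b *
        ∑' γ : latOf K σ Ω,
          conj (σ (algebraMap (𝓞 K) K α) * z + (γ : ℂ)) ^ a /
            (σ (algebraMap (𝓞 K) K α) * z + (γ : ℂ)) ^ b := by
  classical
  set A := σ (algebraMap (𝓞 K) K α) with hA_def
  have h1 : algebraMap (𝓞 K) K α ≠ 0 :=
    fun h => hα ((map_eq_zero_iff _ (IsFractionRing.injective (𝓞 K) K)).mp h)
  have hA : A ≠ 0 := (map_ne_zero_iff σ σ.injective).2 h1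
  have hS1 : ∀ z₀ ∈ S, Summable fun γ : latOf K σ Ω =>
      conj (z + z₀ + (γ : ℂ)) ^ a / (z + z₀ + (γ : ℂ)) ^ b := fun z₀ _ =>
    latOf_summable hdeg him hΩ ha hb (z + z₀)
  have hS2 : Summable fun γ : latOf K σ Ω =>
      conj (A * z + (γ : ℂ)) ^ a / (A * z + (γ : ℂ)) ^ b :=
    latOf_summable hdeg him hΩ ha hb (A * z)
  refine ⟨hS1, hS2, ?_⟩
  set Γ := latOf K σ Ω with hΓ
  have hφmem : ∀ p : ↥S × ↥Γ, A * ((p.1 : ℂ) + (p.2 : ℂ)) ∈ Γ := by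
    intro p
    rw [mul_add]
    apply Submodule.add_mem
    · obtain ⟨x, hx⟩ := hSmem p.1 p.1.2
      exact (mem_latOf_iff K σ Ω).mpr ⟨x, hx⟩
    · exact latOf_mul_mem α p.2.2
  set φ : ↥S × ↥Γ → ↥Γ := fun p => ⟨A * ((p.1 : ℂ) + (p.2 : ℂ)), hφmem p⟩ with hφ
  have hinj : Function.Injective φ := by
    intro p q h
    have h' : A * ((p.1 : ℂ) + (p.2 : ℂ)) = A * ((q.1 : ℂ) + (q.2 : ℂ)) :=
      congrArg (fun γ : ↥Γ => (γ : ℂ)) h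
    have hsum : (p.1 : ℂ) + (p.2 : ℂ) = (q.1 : ℂ) + (q.2 : ℂ) := mul_left_cancel₀ hA h'
    obtain ⟨u, hu, huniq⟩ := hSrep p.1 (hSmem p.1 p.1.2)
    have e1 : (p.1 : ℂ) = u := huniq p.1 ⟨p.1.2, by
      rw [sub_self]; exact Submodule.zero_mem _⟩
    have e2 : (q.1 : ℂ) = u := huniq q.1 ⟨q.1.2, by
      have hd : (p.1 : ℂ) - q.1 = (q.2 : ℂ) - (p.2 : ℂ) := by linear_combination hsum
      rw [hd]; exact Submodule.sub_mem _ q.2.2 p.2.2⟩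
    have hq1 : (p.1 : ℂ) = q.1 := e1.trans e2.symm
    have hq2 : (p.2 : ℂ) = q.2 := by
      rw [hq1] at hsum; exact add_left_cancel hsum
    exact Prod.ext (Subtype.ext hq1) (Subtype.ext hq2)
  have hsurj : Function.Surjective φ := by
    rintro ⟨lam, hlam⟩
    have hlam' : lam ∈ latOf K σ Ω := hlam
    obtain ⟨x, hx⟩ := (mem_latOf_iff K σ Ω).mp hlam'
    have hw : ∃ x : 𝓞 K, A * (A⁻¹ * lam) = Ω * σ (algebraMap (𝓞 K) K x) :=
      ⟨x, by rw [← mul_assoc, mul_inv_cancel₀ hA, one_mul]; exact hx⟩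
    obtain ⟨z₀, ⟨hz₀S, hz₀Γ⟩, -⟩ := hSrep (A⁻¹ * lam) hw
    refine ⟨(⟨z₀, hz₀S⟩, ⟨A⁻¹ * lam - z₀, hz₀Γ⟩), ?_⟩
    apply Subtype.ext
    show A * (z₀ + (A⁻¹ * lam - z₀)) = lam
    field_simp
    ring
  set Eφ : ↥S × ↥Γ ≃ ↥Γ := Equiv.ofBijective φ ⟨hinj, hsurj⟩ with hEφ
  have hAz : ∀ γ : ↥Γ, A * z + (γ : ℂ) ≠ 0 := by
    intro γ h
    apply hz
    rw [eq_neg_of_add_eq_zero_left h]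
    exact Submodule.neg_mem _ γ.2
  have htne : ∀ p : ↥S × ↥Γ, z + (p.1 : ℂ) + (p.2 : ℂ) ≠ 0 := by
    intro p h
    refine hAz (φ p) ?_
    show A * z + A * ((p.1 : ℂ) + (p.2 : ℂ)) = 0
    rw [← mul_add, show z + ((p.1 : ℂ) + (p.2 : ℂ)) = z + (p.1 : ℂ) + (p.2 : ℂ) from by ring,
      h, mul_zero]
  have harg : ∀ p : ↥S × ↥Γ, A * (z + (p.1 : ℂ) + (p.2 : ℂ)) = A * z + ((φ p : ℂ)) := by
    intro p
    show _ = A * z + A * ((p.1 : ℂ) + (p.2 : ℂ))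
    ring
  have hterm : ∀ p : ↥S × ↥Γ,
      conj (z + (p.1 : ℂ) + (p.2 : ℂ)) ^ a / (z + (p.1 : ℂ) + (p.2 : ℂ)) ^ b
        = conj A ^ (-a) * A ^ b *
          (conj (A * z + (φ p : ℂ)) ^ a / (A * z + (φ p : ℂ)) ^ b) := by
    intro p
    rw [term_scale hA (htne p), harg p]
  have hGφ : Summable fun p : ↥S × ↥Γ =>
      conj A ^ (-a) * A ^ b *
        (conj (A * z + (φ p : ℂ)) ^ a / (A * z + (φ p : ℂ)) ^ b) := by
    apply Summable.mul_left
    have := (Equiv.summable_iff Eφ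
      (f := fun γ : ↥Γ => conj (A * z + (γ : ℂ)) ^ a / (A * z + (γ : ℂ)) ^ b)).2 hS2
    exact this
  have hFsum : Summable fun p : ↥S × ↥Γ =>
      conj (z + (p.1 : ℂ) + (p.2 : ℂ)) ^ a / (z + (p.1 : ℂ) + (p.2 : ℂ)) ^ b :=
    hGφ.congr fun p => (hterm p).symm
  calc ∑ z₀ ∈ S, ∑' γ : ↥Γ, conj (z + z₀ + (γ : ℂ)) ^ a / (z + z₀ + (γ : ℂ)) ^ b
      = ∑' (z₀ : ↥S), ∑' γ : ↥Γ, conj (z + (z₀ : ℂ) + (γ : ℂ)) ^ a /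
          (z + (z₀ : ℂ) + (γ : ℂ)) ^ b := (Finset.tsum_subtype S _).symm
    _ = ∑' p : ↥S × ↥Γ, conj (z + (p.1 : ℂ) + (p.2 : ℂ)) ^ a /
          (z + (p.1 : ℂ) + (p.2 : ℂ)) ^ b := (Summable.tsum_prod hFsum).symm
    _ = ∑' p : ↥S × ↥Γ, conj A ^ (-a) * A ^ b *
          (conj (A * z + (φ p : ℂ)) ^ a / (A * z + (φ p : ℂ)) ^ b) := tsum_congr hterm
    _ = conj A ^ (-a) * A ^ b * ∑' p : ↥S × ↥Γ,
          conj (A * z + (φ p : ℂ)) ^ a / (A * z + (φ p : ℂ)) ^ b := tsum_mul_left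
    _ = conj A ^ (-a) * A ^ b * ∑' γ : ↥Γ,
          conj (A * z + (γ : ℂ)) ^ a / (A * z + (γ : ℂ)) ^ b := by
        congr 1
        exact Eφ.tsum_eq (fun γ : ↥Γ => conj (A * z + (γ : ℂ)) ^ a / (A * z + (γ : ℂ)) ^ b)
end

section
/- Let d > 1 be a natural number, let χ be a primitive Dirichlet character modulo d with values in ℂ, let ζ ∈ ℂ be a primitive d-th root of unity, and set g(χ, ζ) := Σ_{a=0}^{d−1} χ(a)·ζ^a. Then for every integer k ≥ 2, the Dirichlet L-function satisfies L(χ, k) = (g(χ, ζ)/d) · Σ_{a=1}^{d−1} conj(χ(a)) · Li_k(ζ^{−a}), where Li_k(z) := Σ_{n=1}^{∞} z^n/n^k (this series converges absolutely for |z| = 1 and k ≥ 2). -/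
open scoped ComplexConjugate

section aux

variable {d : ℕ} [NeZero d]

/-- Sum over `range d` of a `ZMod d`-indexed function equals sum over `ZMod d`. -/
lemma sum_range_cast_eq_sum_univ (f : ZMod d → ℂ) :
    ∑ a ∈ Finset.range d, f ((a : ℕ) : ZMod d) = ∑ x : ZMod d, f x := by
  refine Finset.sum_nbij' (fun a ↦ ((a : ℕ) : ZMod d)) (fun x ↦ x.val) ?_ ?_ ?_ ?_ ?_
  · intro a _; exact Finset.mem_univ _
  · intro x _; exact Finset.mem_range.mpr (ZMod.val_lt x)
  · intro a ha; exact ZMod.val_natCast_of_lt (Finset.mem_range.mp ha)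
  · intro x _; exact ZMod.natCast_rightInverse x
  · intro a _; rfl

lemma zpow_int_eq_pow_val (ζ : ℂ) (hζ : IsPrimitiveRoot ζ d) (j : ℤ) :
    ζ ^ j = ζ ^ ((j : ZMod d)).val := by
  have hdpos : 0 < d := Nat.pos_of_ne_zero (NeZero.ne d)
  have hne : ζ ≠ 0 := by
    intro h
    have := hζ.pow_eq_one
    rw [h, zero_pow hdpos.ne'] at this
    exact zero_ne_one this
  obtain ⟨t, ht⟩ : (d : ℤ) ∣ j - (((j : ZMod d)).val : ℤ) := by
    have : ((j - (((j : ZMod d)).val : ℤ) : ℤ) : ZMod d) = 0 := by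
      push_cast
      simp [ZMod.natCast_val, ZMod.intCast_zmod_cast]
    exact (ZMod.intCast_zmod_eq_zero_iff_dvd _ _).mp this
  have hj : j = (((j : ZMod d)).val : ℤ) + d * t := by linarith
  conv_lhs => rw [hj]
  rw [zpow_add₀ hne, zpow_natCast, mul_comm (d : ℤ) t, zpow_mul, zpow_natCast,
    ← zpow_natCast (ζ ^ t) d, ← zpow_mul, mul_comm t (d : ℤ), zpow_mul, zpow_natCast,
    hζ.pow_eq_one, one_zpow, mul_one]

end aux

/-- The `k`-th polylogarithm `Li_k(z) = Σ_{n=1}^∞ z^n/n^k`. -/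
noncomputable def Li (k : ℕ) (z : ℂ) : ℂ :=
  ∑' n : ℕ, z ^ (n + 1) / ((n + 1 : ℕ) : ℂ) ^ k

/-- Coleman's classical formula: for a primitive Dirichlet character `χ` mod `d > 1`,
a primitive `d`-th root of unity `ζ` and `k ≥ 2`,
`L(χ, k) = (g(χ,ζ)/d)·Σ_{a=1}^{d-1} conj(χ(a))·Li_k(ζ^{-a})`. -/
theorem dirichlet_L_eq_gaussSum_mul_sum_polylog
    (d : ℕ) (hd : 1 < d)
    (χ : DirichletCharacter ℂ d) (hχ : χ.IsPrimitive)
    (ζ : ℂ) (hζ : IsPrimitiveRoot ζ d)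
    (k : ℕ) (hk : 2 ≤ k) :
    (∑' n : ℕ, χ ((n + 1 : ℕ) : ZMod d) / ((n + 1 : ℕ) : ℂ) ^ k) =
      ((∑ a ∈ Finset.range d, χ ((a : ℕ) : ZMod d) * ζ ^ a) / (d : ℂ)) *
        ∑ a ∈ Finset.Ico 1 d, conj (χ ((a : ℕ) : ZMod d)) * Li k (ζ ^ (-(a : ℤ))) := by
  haveI : NeZero d := ⟨by omega⟩
  set e : AddChar (ZMod d) ℂ := AddChar.zmodChar d hζ.pow_eq_one with he
  have he_prim : e.IsPrimitive := AddChar.zmodChar_primitive_of_primitive_root d hζ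
  have hζnorm : ‖ζ‖ = 1 := hζ.norm'_eq_one (by omega)
  have hconj_e : ∀ x : ZMod d, conj (e x) = e (-x) := by
    intro x
    have h1 : conj (e x) = (e x)⁻¹ := by
      refine (Complex.inv_eq_conj ?_).symm
      rw [he, AddChar.zmodChar_apply, norm_pow, hζnorm, one_pow]
    rw [h1, ← AddChar.map_neg_eq_inv]
  have hG : (∑ a ∈ Finset.range d, χ ((a : ℕ) : ZMod d) * ζ ^ a) = gaussSum χ e := by
    rw [gaussSum, ← sum_range_cast_eq_sum_univ (fun x => χ x * e x)]
    refine Finset.sum_congr rfl fun a ha => ?_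
    rw [he, AddChar.zmodChar_apply, ZMod.val_natCast_of_lt (Finset.mem_range.mp ha)]
  haveI : Fact (1 < d) := ⟨hd⟩
  have hd0 : (d : ℂ) ≠ 0 := Nat.cast_ne_zero.mpr (by omega)
  -- conj of χ values
  have hstar : ∀ m : ZMod d, conj (χ m) = χ⁻¹ m := fun m => MulChar.star_apply' χ m
  have hstarinv : ∀ m : ZMod d, conj (χ⁻¹ m) = χ m := by
    intro m
    have := MulChar.star_apply' (χ⁻¹) m
    rwa [inv_inv] at this
  -- indicator
  have hind : ∀ m : ZMod d, χ m * χ⁻¹ m = if IsUnit m then 1 else 0 := by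
    intro m
    by_cases h : IsUnit m
    · rw [if_pos h, MulChar.inv_apply_eq_inv, Ring.mul_inverse_cancel _ (h.map χ)]
    · rw [if_neg h, MulChar.map_nonunit χ h, zero_mul]
  set c : ℂ := ∑ m : ZMod d, if IsUnit m then (1:ℂ) else 0 with hc
  have hc_ne : c ≠ 0 := by
    rw [hc, Finset.sum_boole]
    rw [Nat.cast_ne_zero, ← Nat.pos_iff_ne_zero, Finset.card_pos]
    exact ⟨1, by simp⟩
  have hGm : ∀ m : ZMod d, gaussSum χ (e.mulShift m) = χ⁻¹ m * gaussSum χ e :=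
    fun m => gaussSum_mulShift_of_isPrimitive e hχ m
  have hconjG : ∀ m : ZMod d,
      conj (gaussSum χ (e.mulShift m)) = ∑ x : ZMod d, conj (χ x) * e (-(m * x)) := by
    intro m
    rw [gaussSum, map_sum]
    refine Finset.sum_congr rfl fun x _ => ?_
    rw [map_mul, AddChar.mulShift_apply, hconj_e]
  -- |g|^2 = d
  have hB : gaussSum χ e * conj (gaussSum χ e) = (d : ℂ) := by
    have way1 : ∑ m : ZMod d, (gaussSum χ (e.mulShift m) * conj (gaussSum χ (e.mulShift m)))
        = c * (gaussSum χ e * conj (gaussSum χ e)) := by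
      rw [hc, Finset.sum_mul]
      refine Finset.sum_congr rfl fun m _ => ?_
      rw [hGm m, map_mul, hstarinv m, ← hind m]
      ring
    have way2 : ∑ m : ZMod d, (gaussSum χ (e.mulShift m) * conj (gaussSum χ (e.mulShift m)))
        = (d : ℂ) * c := by
      have expand : ∀ m : ZMod d, gaussSum χ (e.mulShift m) * conj (gaussSum χ (e.mulShift m))
          = ∑ a : ZMod d, ∑ b : ZMod d, χ a * conj (χ b) * e (m * (a - b)) := by
        intro m
        rw [hconjG m, gaussSum, Finset.sum_mul_sum]
        refine Finset.sum_congr rfl fun a _ => Finset.sum_congr rfl fun b _ => ?_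
        rw [AddChar.mulShift_apply, mul_mul_mul_comm, ← AddChar.map_add_eq_mul]
        congr 1
        ring_nf
      simp_rw [expand]
      rw [Finset.sum_comm]
      refine Eq.trans (Finset.sum_congr rfl fun a _ => Finset.sum_comm) ?_
      simp_rw [← Finset.mul_sum]
      simp_rw [AddChar.sum_mulShift _ he_prim]
      simp only [sub_eq_zero, ZMod.card, Nat.cast_ite, Nat.cast_zero, mul_ite, mul_zero,
        Finset.sum_ite_eq, Finset.mem_univ, if_true]
      rw [hc, Finset.mul_sum]
      refine Finset.sum_congr rfl fun a _ => ?_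
      rw [hstar a, hind a, mul_comm]
    have : c * (gaussSum χ e * conj (gaussSum χ e)) = c * (d : ℂ) := by
      rw [← way1, way2]; ring
    exact mul_left_cancel₀ hc_ne this
  -- key separability identity
  have hC : ∀ m : ZMod d,
      gaussSum χ e * ∑ x : ZMod d, conj (χ x) * e (-(m * x)) = (d : ℂ) * χ m := by
    intro m
    rw [← hconjG m, hGm m, map_mul, hstarinv m]
    calc gaussSum χ e * (χ m * conj (gaussSum χ e))
        = (gaussSum χ e * conj (gaussSum χ e)) * χ m := by ring
      _ = (d : ℂ) * χ m := by rw [hB]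
  -- the exponential as a value of e
  have hzeta : ∀ (a n : ℕ), ζ ^ (-(a : ℤ) * ((n + 1 : ℕ) : ℤ))
      = e (-(((n + 1 : ℕ) : ZMod d) * ((a : ℕ) : ZMod d))) := by
    intro a n
    rw [zpow_int_eq_pow_val ζ hζ, he, AddChar.zmodChar_apply]
    congr 2
    push_cast
    ring
  -- key pointwise identity, over ℕ
  have hK : ∀ n : ℕ,
      gaussSum χ e * ∑ a ∈ Finset.Ico 1 d, conj (χ ((a : ℕ) : ZMod d))
        * ζ ^ (-(a : ℤ) * ((n + 1 : ℕ) : ℤ))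
      = (d : ℂ) * χ ((n + 1 : ℕ) : ZMod d) := by
    intro n
    set m : ZMod d := ((n + 1 : ℕ) : ZMod d) with hm
    have hext : ∑ a ∈ Finset.Ico 1 d, conj (χ ((a : ℕ) : ZMod d))
          * ζ ^ (-(a : ℤ) * ((n + 1 : ℕ) : ℤ))
        = ∑ x : ZMod d, conj (χ x) * e (-(m * x)) := by
      rw [← sum_range_cast_eq_sum_univ (fun x => conj (χ x) * e (-(m * x))),
        Finset.range_eq_Ico, Finset.sum_eq_sum_Ico_succ_bot (by omega : 0 < d),
        Nat.cast_zero, MulChar.map_nonunit χ not_isUnit_zero, map_zero, zero_mul, zero_add]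
      refine Finset.sum_congr rfl fun a _ => ?_
      rw [hzeta a n]
    rw [hext, hC m]
  -- summability
  have hs0 : Summable (fun n : ℕ => 1 / (n : ℝ) ^ k) := Real.summable_one_div_nat_pow.mpr hk
  have hsreal : Summable (fun n : ℕ => 1 / ((n + 1 : ℕ) : ℝ) ^ k) := by
    have := (summable_nat_add_iff 1).mpr hs0
    simpa using this
  have hsummand : ∀ (a : ℕ), Summable (fun n : ℕ =>
      conj (χ ((a : ℕ) : ZMod d)) * (ζ ^ (-(a : ℤ) * ((n + 1 : ℕ) : ℤ)) / ((n + 1 : ℕ) : ℂ) ^ k)) := by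
    intro a
    refine Summable.of_norm_bounded hsreal fun n => ?_
    rw [norm_mul, norm_div, norm_zpow, hζnorm, one_zpow, norm_pow, Complex.norm_natCast]
    calc ‖conj (χ ((a : ℕ) : ZMod d))‖ * (1 / ((n + 1 : ℕ) : ℝ) ^ k)
        ≤ 1 * (1 / ((n + 1 : ℕ) : ℝ) ^ k) := by
          gcongr
          rw [RCLike.norm_conj]
          exact χ.norm_le_one _
      _ = 1 / ((n + 1 : ℕ) : ℝ) ^ k := one_mul _
  -- rewrite Li
  have hLi : ∀ a : ℕ, Li k (ζ ^ (-(a : ℤ)))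
      = ∑' n : ℕ, ζ ^ (-(a : ℤ) * ((n + 1 : ℕ) : ℤ)) / ((n + 1 : ℕ) : ℂ) ^ k := by
    intro a
    rw [Li]
    refine tsum_congr fun n => ?_
    congr 1
    rw [zpow_mul, zpow_natCast]
  have step2 : ∑ a ∈ Finset.Ico 1 d, conj (χ ((a : ℕ) : ZMod d)) * Li k (ζ ^ (-(a : ℤ)))
      = ∑' n : ℕ, ∑ a ∈ Finset.Ico 1 d, conj (χ ((a : ℕ) : ZMod d))
          * (ζ ^ (-(a : ℤ) * ((n + 1 : ℕ) : ℤ)) / ((n + 1 : ℕ) : ℂ) ^ k) := by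
    rw [Finset.sum_congr rfl fun a _ => by rw [hLi a, ← tsum_mul_left]]
    exact (Summable.tsum_finsetSum fun a _ => hsummand a).symm
  rw [hG, step2, ← tsum_mul_left]
  refine tsum_congr fun n => ?_
  symm
  simp_rw [← mul_div_assoc]
  rw [← Finset.sum_div, div_mul_div_comm, hK n, mul_div_mul_left _ _ hd0]
end
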